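/- Let 𝔄 be a Boolean algebra of subsets of a countable set D carrying a finitely additive probability measure μ that is almost strictly positive (μ(A) = 0 iff A is finite) and such that 𝔄/fin is not σ-centred. Then the Stone space K of 𝔄 is a compactification of the discrete space D whose remainder K \ D is non-separable and carries a strictly positive regular Borel probability measure. -/

import Mathlib

open MeasureTheory

/-- Ultrafilters on an algebra 𝔄 of subsets of D. -/
def IsUltrafilterOn {D : Type*} (𝔄 : Set (Set D)) (u : Set (Set D)) : Prop :=
  u ⊆ 𝔄 ∧ Set.univ ∈ u ∧ ∅ ∉ u ∧
  (∀ A ∈ u, ∀ B ∈ u, A ∩ B ∈ u) ∧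
  (∀ A ∈ u, ∀ B ∈ 𝔄, A ⊆ B → B ∈ u) ∧
  (∀ A ∈ 𝔄, A ∈ u ∨ Aᶜ ∈ u)

/-- The Stone space K of 𝔄: the space of ultrafilters on 𝔄. -/
def StoneOf {D : Type*} (𝔄 : Set (Set D)) : Type _ :=
  {u : Set (Set D) // IsUltrafilterOn 𝔄 u}

/-- The Stone topology on K, generated by the basic (cl)open sets
{u : A ∈ u} for A ∈ 𝔄. -/
instance stoneTop {D : Type*} (𝔄 : Set (Set D)) : TopologicalSpace (StoneOf 𝔄) :=
  TopologicalSpace.generateFrom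
    {V : Set (StoneOf 𝔄) | ∃ A ∈ 𝔄, V = {u : StoneOf 𝔄 | A ∈ u.1}}

instance stoneMeas {D : Type*} (𝔄 : Set (Set D)) :
    MeasurableSpace (StoneOf 𝔄) := borel _

/-- The remainder K \ D: the set of nonprincipal ultrafilters on 𝔄. -/
def stoneRemainder {D : Type*} (𝔄 : Set (Set D)) : Set (StoneOf 𝔄) :=
  {u : StoneOf 𝔄 | ∀ A ∈ u.1, A.Infinite}

/-- 𝔄/fin is σ-centred. -/
def SigmaCentredModFin {D : Type*} (𝔄 : Set (Set D)) : Prop :=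
  ∃ C : ℕ → Set (Set D), (∀ n, C n ⊆ 𝔄) ∧
    (∀ A ∈ 𝔄, A.Infinite → ∃ n, A ∈ C n) ∧
    (∀ n, ∀ t : Finset (Set D), ↑t ⊆ C n → (⋂₀ (t : Set (Set D))).Infinite)

section Aux
open Topology TopologicalSpace Set

namespace StoneOf

variable {D : Type*} {𝔄 : Set (Set D)}

/-- Basic clopen set of the Stone space. -/
def V (𝔄 : Set (Set D)) (A : Set D) : Set (StoneOf 𝔄) := {u | A ∈ u.1}

lemma mem_V {A : Set D} {u : StoneOf 𝔄} : u ∈ V 𝔄 A ↔ A ∈ u.1 := Iff.rfl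

lemma mem_alg (u : StoneOf 𝔄) {A : Set D} (h : A ∈ u.1) : A ∈ 𝔄 := u.2.1 h
lemma univ_mem (u : StoneOf 𝔄) : Set.univ ∈ u.1 := u.2.2.1
lemma empty_not_mem (u : StoneOf 𝔄) : ∅ ∉ u.1 := u.2.2.2.1
lemma inter_mem (u : StoneOf 𝔄) {A B : Set D} (hA : A ∈ u.1) (hB : B ∈ u.1) :
    A ∩ B ∈ u.1 := u.2.2.2.2.1 A hA B hB
lemma up_mem (u : StoneOf 𝔄) {A B : Set D} (hA : A ∈ u.1) (hB : B ∈ 𝔄) (hAB : A ⊆ B) :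
    B ∈ u.1 := u.2.2.2.2.2.1 A hA B hB hAB
lemma dichot (u : StoneOf 𝔄) {A : Set D} (hA : A ∈ 𝔄) : A ∈ u.1 ∨ Aᶜ ∈ u.1 :=
  u.2.2.2.2.2.2 A hA

lemma compl_mem_iff (u : StoneOf 𝔄) {A : Set D} (hA : A ∈ 𝔄) :
    Aᶜ ∈ u.1 ↔ A ∉ u.1 := by
  constructor
  · intro hc hm
    have := u.inter_mem hm hc
    rw [Set.inter_compl_self] at this
    exact u.empty_not_mem this
  · intro hm
    rcases u.dichot hA with h | h
    · exact absurd h hm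
    · exact h

lemma nonempty_of_mem (u : StoneOf 𝔄) {A : Set D} (h : A ∈ u.1) : A.Nonempty := by
  rcases Set.eq_empty_or_nonempty A with rfl | hne
  · exact absurd h u.empty_not_mem
  · exact hne

lemma biInter_mem (u : StoneOf 𝔄) {ι : Type*} (t : Finset ι) (g : ι → Set D)
    (h : ∀ i ∈ t, g i ∈ u.1) : (⋂ i ∈ t, g i) ∈ u.1 := by
  classical
  induction t using Finset.induction_on with
  | empty => simpa using u.univ_mem
  | insert a s hnot ih =>
    rw [Finset.set_biInter_insert]
    exact u.inter_mem (h a (Finset.mem_insert_self a s))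
      (ih fun i hi => h i (Finset.mem_insert_of_mem hi))

lemma alg_biUnion (hempt : ∅ ∈ 𝔄) (hunion : ∀ A ∈ 𝔄, ∀ B ∈ 𝔄, A ∪ B ∈ 𝔄)
    {ι : Type*} (t : Finset ι) (g : ι → Set D) (h : ∀ i ∈ t, g i ∈ 𝔄) :
    (⋃ i ∈ t, g i) ∈ 𝔄 := by
  classical
  induction t using Finset.induction_on with
  | empty => simpa using hempt
  | insert a s hnot ih =>
    rw [Finset.set_biUnion_insert]
    exact hunion _ (h a (Finset.mem_insert_self a s)) _
      (ih fun i hi => h i (Finset.mem_insert_of_mem hi))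

lemma alg_biInter (huniv : Set.univ ∈ 𝔄) (hinter : ∀ A ∈ 𝔄, ∀ B ∈ 𝔄, A ∩ B ∈ 𝔄)
    {ι : Type*} (t : Finset ι) (g : ι → Set D) (h : ∀ i ∈ t, g i ∈ 𝔄) :
    (⋂ i ∈ t, g i) ∈ 𝔄 := by
  classical
  induction t using Finset.induction_on with
  | empty => simpa using huniv
  | insert a s hnot ih =>
    rw [Finset.set_biInter_insert]
    exact hinter _ (h a (Finset.mem_insert_self a s)) _
      (ih fun i hi => h i (Finset.mem_insert_of_mem hi))

lemma isOpen_V {A : Set D} (hA : A ∈ 𝔄) : IsOpen (V 𝔄 A) :=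
  isOpen_generateFrom_of_mem ⟨A, hA, rfl⟩

lemma isBasis (hinter : ∀ A ∈ 𝔄, ∀ B ∈ 𝔄, A ∩ B ∈ 𝔄) (huniv : Set.univ ∈ 𝔄) :
    IsTopologicalBasis {Vs : Set (StoneOf 𝔄) | ∃ A ∈ 𝔄, Vs = {u : StoneOf 𝔄 | A ∈ u.1}} := by
  refine ⟨?_, ?_, rfl⟩
  · rintro t₁ ⟨A, hA, rfl⟩ t₂ ⟨B, hB, rfl⟩ x ⟨hx₁, hx₂⟩
    refine ⟨V 𝔄 (A ∩ B), ⟨A ∩ B, hinter A hA B hB, rfl⟩, x.inter_mem hx₁ hx₂, ?_⟩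
    rintro u hu
    exact ⟨u.up_mem hu hA Set.inter_subset_left, u.up_mem hu hB Set.inter_subset_right⟩
  · apply Set.eq_univ_of_forall
    intro u
    exact ⟨V 𝔄 Set.univ, ⟨Set.univ, huniv, rfl⟩, u.univ_mem⟩

end StoneOf
end Aux

section Compactness
open Topology TopologicalSpace Set

namespace StoneOf

variable {D : Type*} {𝔄 : Set (Set D)}

/-- Characteristic-function embedding of the Stone space into the Cantor cube. -/
noncomputable def chi (u : StoneOf 𝔄) : Set D → Bool :=
  fun A => @decide (A ∈ u.1) (Classical.propDecidable _)

lemma chi_eq_true {u : StoneOf 𝔄} {A : Set D} : chi u A = true ↔ A ∈ u.1 := by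
  simp [chi]

lemma chi_eq_false {u : StoneOf 𝔄} {A : Set D} : chi u A = false ↔ A ∉ u.1 := by
  simp [chi]

lemma isClosed_coord (A : Set D) (b : Bool) : IsClosed {f : Set D → Bool | f A = b} :=
  IsClosed.preimage (continuous_apply A) isClosed_singleton

lemma isOpen_coord (A : Set D) (b : Bool) : IsOpen {f : Set D → Bool | f A = b} := by
  have : {f : Set D → Bool | f A = b} = (fun f : Set D → Bool => f A) ⁻¹' {b} := rfl
  rw [this]
  exact (isOpen_discrete _).preimage (continuous_apply A)

lemma continuous_chi (hcompl : ∀ A ∈ 𝔄, Aᶜ ∈ 𝔄) :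
    Continuous (chi : StoneOf 𝔄 → Set D → Bool) := by
  refine continuous_pi fun A => continuous_discrete_rng.mpr fun b => ?_
  cases b
  · by_cases hA : A ∈ 𝔄
    · have : (fun u : StoneOf 𝔄 => chi u A) ⁻¹' {false} = V 𝔄 Aᶜ := by
        ext u
        simp only [Set.mem_preimage, Set.mem_singleton_iff, mem_V, chi_eq_false]
        exact (compl_mem_iff u hA).symm
      rw [this]
      exact isOpen_V (hcompl A hA)
    · have : (fun u : StoneOf 𝔄 => chi u A) ⁻¹' {false} = Set.univ := by
        ext u
        simp only [Set.mem_preimage, Set.mem_singleton_iff, chi_eq_false, Set.mem_univ, iff_true]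
        exact fun h => hA (mem_alg u h)
      rw [this]; exact isOpen_univ
  · by_cases hA : A ∈ 𝔄
    · have : (fun u : StoneOf 𝔄 => chi u A) ⁻¹' {true} = V 𝔄 A := by
        ext u
        simp [mem_V, chi_eq_true]
      rw [this]; exact isOpen_V hA
    · have : (fun u : StoneOf 𝔄 => chi u A) ⁻¹' {true} = ∅ := by
        ext u
        simp only [Set.mem_preimage, Set.mem_singleton_iff, chi_eq_true, Set.mem_empty_iff_false,
          iff_false]
        exact fun h => hA (mem_alg u h)
      rw [this]; exact isOpen_empty

lemma inducing_chi (hcompl : ∀ A ∈ 𝔄, Aᶜ ∈ 𝔄) :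
    IsInducing (chi : StoneOf 𝔄 → Set D → Bool) := by
  refine ⟨le_antisymm (continuous_iff_le_induced.mp (continuous_chi hcompl)) ?_⟩
  apply le_generateFrom
  rintro s ⟨A, hA, rfl⟩
  have : {u : StoneOf 𝔄 | A ∈ u.1} = chi ⁻¹' {f : Set D → Bool | f A = true} := by
    ext u; simp [chi_eq_true]
  rw [this]
  exact isOpen_induced (isOpen_coord A true)

lemma injective_chi : Function.Injective (chi : StoneOf 𝔄 → Set D → Bool) := by
  intro u v h
  apply Subtype.ext
  ext A
  rw [← chi_eq_true, ← chi_eq_true, h]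

/-- The image of the Stone space in the Cantor cube. -/
def goodSet (𝔄 : Set (Set D)) : Set (Set D → Bool) :=
  {f | (∀ A, A ∉ 𝔄 → f A = false) ∧ f Set.univ = true ∧ f ∅ = false ∧
    (∀ A B, f A = true → f B = true → f (A ∩ B) = true) ∧
    (∀ A B, f A = true → B ∈ 𝔄 → A ⊆ B → f B = true) ∧
    (∀ A, A ∈ 𝔄 → f A = true ∨ f Aᶜ = true)}

lemma range_chi : Set.range (chi : StoneOf 𝔄 → Set D → Bool) = goodSet 𝔄 := by
  ext f
  constructor
  · rintro ⟨u, rfl⟩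
    refine ⟨fun A hA => chi_eq_false.mpr (fun h => hA (mem_alg u h)),
      chi_eq_true.mpr (univ_mem u), chi_eq_false.mpr (empty_not_mem u),
      fun A B hA hB => chi_eq_true.mpr (inter_mem u (chi_eq_true.mp hA) (chi_eq_true.mp hB)),
      fun A B hA hB hAB => chi_eq_true.mpr (up_mem u (chi_eq_true.mp hA) hB hAB),
      fun A hA => ?_⟩
    rcases dichot u (A := A) hA with h | h
    · exact Or.inl (chi_eq_true.mpr h)
    · exact Or.inr (chi_eq_true.mpr h)
  · rintro ⟨h1, h2, h3, h4, h5, h6⟩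
    refine ⟨⟨{A | f A = true}, ?_, ?_, ?_, ?_, ?_, ?_⟩, ?_⟩
    · intro A hA
      by_contra h
      have := h1 A h
      rw [Set.mem_setOf_eq] at hA
      rw [hA] at this
      exact Bool.noConfusion this
    · exact h2
    · simp only [Set.mem_setOf_eq, h3]
      exact fun h => Bool.false_ne_true h
    · exact fun A hA B hB => h4 A B hA hB
    · exact fun A hA B hB hAB => h5 A B hA hB hAB
    · exact fun A hA => h6 A hA
    · funext A
      show (chi _ A) = f A
      rcases Bool.eq_false_or_eq_true (f A) with hf | hf
      · exact (chi_eq_true.mpr hf).trans hf.symm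
      · refine (chi_eq_false.mpr fun hmem => ?_).trans hf.symm
        rw [Set.mem_setOf_eq, hf] at hmem
        exact Bool.noConfusion hmem

lemma isClosed_goodSet : IsClosed (goodSet 𝔄) := by
  have e : goodSet 𝔄 = {f : Set D → Bool | ∀ A, A ∉ 𝔄 → f A = false} ∩
      ({f | f Set.univ = true} ∩ ({f | f ∅ = false} ∩
      ({f : Set D → Bool | ∀ A B, f A = true → f B = true → f (A ∩ B) = true} ∩
      ({f : Set D → Bool | ∀ A B, f A = true → B ∈ 𝔄 → A ⊆ B → f B = true} ∩
      {f : Set D → Bool | ∀ A, A ∈ 𝔄 → f A = true ∨ f Aᶜ = true})))) := by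
    ext f
    simp only [goodSet, Set.mem_setOf_eq, Set.mem_inter_iff]
  rw [e]
  refine IsClosed.inter ?_ (IsClosed.inter (isClosed_coord _ _) (IsClosed.inter (isClosed_coord _ _)
    (IsClosed.inter ?_ (IsClosed.inter ?_ ?_))))
  · have : {f : Set D → Bool | ∀ A, A ∉ 𝔄 → f A = false} =
        ⋂ A, {f : Set D → Bool | A ∉ 𝔄 → f A = false} := by
      ext f; simp
    rw [this]
    refine isClosed_iInter fun A => ?_
    by_cases hA : A ∈ 𝔄
    · have : {f : Set D → Bool | A ∉ 𝔄 → f A = false} = Set.univ := by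
        ext f; simp [hA]
      rw [this]; exact isClosed_univ
    · have : {f : Set D → Bool | A ∉ 𝔄 → f A = false} = {f | f A = false} := by
        ext f; simp [hA]
      rw [this]; exact isClosed_coord _ _
  · have : {f : Set D → Bool | ∀ A B, f A = true → f B = true → f (A ∩ B) = true} =
        ⋂ A, ⋂ B, ({f : Set D → Bool | f A = false} ∪ ({f | f B = false} ∪
          {f | f (A ∩ B) = true})) := by
      ext f
      simp only [Set.mem_setOf_eq, Set.mem_iInter, Set.mem_union]
      refine forall_congr' fun A => forall_congr' fun B => ?_
      cases hA : f A <;> cases hB : f B <;> simp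
    rw [this]
    exact isClosed_iInter fun A => isClosed_iInter fun B =>
      (isClosed_coord _ _).union ((isClosed_coord _ _).union (isClosed_coord _ _))
  · have : {f : Set D → Bool | ∀ A B, f A = true → B ∈ 𝔄 → A ⊆ B → f B = true} =
        ⋂ A, ⋂ B, {f : Set D → Bool | f A = true → B ∈ 𝔄 → A ⊆ B → f B = true} := by
      ext f; simp
    rw [this]
    refine isClosed_iInter fun A => isClosed_iInter fun B => ?_
    by_cases h : B ∈ 𝔄 ∧ A ⊆ B
    · have : {f : Set D → Bool | f A = true → B ∈ 𝔄 → A ⊆ B → f B = true} =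
          {f : Set D → Bool | f A = false} ∪ {f | f B = true} := by
        ext f
        simp only [Set.mem_setOf_eq, Set.mem_union]
        cases hA : f A <;> simp [h.1, h.2]
      rw [this]; exact (isClosed_coord _ _).union (isClosed_coord _ _)
    · have : {f : Set D → Bool | f A = true → B ∈ 𝔄 → A ⊆ B → f B = true} = Set.univ := by
        ext f
        simp only [Set.mem_setOf_eq, Set.mem_univ, iff_true]
        intro _ hB hAB
        exact absurd ⟨hB, hAB⟩ h
      rw [this]; exact isClosed_univ
  · have : {f : Set D → Bool | ∀ A, A ∈ 𝔄 → f A = true ∨ f Aᶜ = true} =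
        ⋂ A, {f : Set D → Bool | A ∈ 𝔄 → f A = true ∨ f Aᶜ = true} := by
      ext f; simp
    rw [this]
    refine isClosed_iInter fun A => ?_
    by_cases hA : A ∈ 𝔄
    · have : {f : Set D → Bool | A ∈ 𝔄 → f A = true ∨ f Aᶜ = true} =
          {f : Set D → Bool | f A = true} ∪ {f | f Aᶜ = true} := by
        ext f; simp [hA]
      rw [this]; exact (isClosed_coord _ _).union (isClosed_coord _ _)
    · have : {f : Set D → Bool | A ∈ 𝔄 → f A = true ∨ f Aᶜ = true} = Set.univ := by
        ext f; simp [hA]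
      rw [this]; exact isClosed_univ

lemma compactSpace (hcompl : ∀ A ∈ 𝔄, Aᶜ ∈ 𝔄) : CompactSpace (StoneOf 𝔄) := by
  have hemb : IsEmbedding (chi : StoneOf 𝔄 → Set D → Bool) :=
    ⟨inducing_chi hcompl, injective_chi⟩
  have hce : IsClosedEmbedding (chi : StoneOf 𝔄 → Set D → Bool) :=
    ⟨hemb, by rw [range_chi]; exact isClosed_goodSet⟩
  exact hce.compactSpace

end StoneOf
end Compactness

section Principal
open Topology TopologicalSpace Set Filter

namespace StoneOf

variable {D : Type*} {𝔄 : Set (Set D)}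

lemma isUltra_principal (huniv : Set.univ ∈ 𝔄)
    (hinter : ∀ A ∈ 𝔄, ∀ B ∈ 𝔄, A ∩ B ∈ 𝔄) (hcompl : ∀ A ∈ 𝔄, Aᶜ ∈ 𝔄) (d : D) :
    IsUltrafilterOn 𝔄 {A | A ∈ 𝔄 ∧ d ∈ A} := by
  refine ⟨fun A hA => hA.1, ⟨huniv, trivial⟩, fun h => h.2, ?_, ?_, ?_⟩
  · exact fun A hA B hB => ⟨hinter A hA.1 B hB.1, hA.2, hB.2⟩
  · exact fun A hA B hB hAB => ⟨hB, hAB hA.2⟩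
  · intro A hA
    by_cases hd : d ∈ A
    · exact Or.inl ⟨hA, hd⟩
    · exact Or.inr ⟨hcompl A hA, hd⟩

lemma eq_principal_of_singleton_mem {u : StoneOf 𝔄} {d : D} (hd : {d} ∈ u.1) :
    u.1 = {A | A ∈ 𝔄 ∧ d ∈ A} := by
  ext A
  constructor
  · intro hA
    refine ⟨mem_alg u hA, ?_⟩
    by_contra h
    have h2 := inter_mem u hA hd
    rw [Set.inter_singleton_eq_empty.mpr h] at h2
    exact empty_not_mem u h2
  · intro hA
    exact up_mem u hd hA.1 (Set.singleton_subset_iff.mpr hA.2)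

lemma exists_singleton_mem_finset (hfin : ∀ F : Set D, F.Finite → F ∈ 𝔄)
    (u : StoneOf 𝔄) (t : Finset D) (hA : (t : Set D) ∈ u.1) :
    ∃ d : D, {d} ∈ u.1 := by
  classical
  induction t using Finset.induction_on with
  | empty => simp only [Finset.coe_empty] at hA; exact absurd hA (empty_not_mem u)
  | insert a s h ih =>
    rw [Finset.coe_insert] at hA
    by_cases hm : {a} ∈ u.1
    · exact ⟨a, hm⟩
    · have hc : {a}ᶜ ∈ u.1 := by
        rcases dichot u (hfin {a} (Set.finite_singleton a)) with h' | h'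
        · exact absurd h' hm
        · exact h'
      have h2 : insert a (s : Set D) ∩ {a}ᶜ ∈ u.1 := inter_mem u hA hc
      have hsub : insert a (s : Set D) ∩ {a}ᶜ ⊆ (s : Set D) := by
        rintro x ⟨hx1, hx2⟩
        rcases hx1 with rfl | hx1
        · exact absurd rfl hx2
        · exact hx1
      exact ih (up_mem u h2 (hfin _ s.finite_toSet) hsub)

lemma exists_singleton_mem (hfin : ∀ F : Set D, F.Finite → F ∈ 𝔄)
    (u : StoneOf 𝔄) {A : Set D} (hAfin : A.Finite) (hA : A ∈ u.1) :
    ∃ d : D, {d} ∈ u.1 := by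
  have hc : (hAfin.toFinset : Set D) = A := hAfin.coe_toFinset
  rw [← hc] at hA
  exact exists_singleton_mem_finset hfin u _ hA

lemma remainder_compl (hfin : ∀ F : Set D, F.Finite → F ∈ 𝔄) :
    (stoneRemainder 𝔄)ᶜ = ⋃ d : D, V 𝔄 {d} := by
  ext u
  simp only [Set.mem_compl_iff, stoneRemainder, Set.mem_setOf_eq, Set.mem_iUnion, mem_V]
  constructor
  · intro h
    push_neg at h
    obtain ⟨A, hA, hAinf⟩ := h
    exact exists_singleton_mem hfin u hAinf hA
  · rintro ⟨d, hd⟩ h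
    exact (h {d} hd) (Set.finite_singleton d)

lemma isClosed_remainder (hfin : ∀ F : Set D, F.Finite → F ∈ 𝔄) :
    IsClosed (stoneRemainder 𝔄) := by
  rw [← isOpen_compl_iff, remainder_compl hfin]
  exact isOpen_iUnion fun d => isOpen_V (hfin {d} (Set.finite_singleton d))

lemma exists_remainder_mem (huniv : Set.univ ∈ 𝔄)
    (hinter : ∀ A ∈ 𝔄, ∀ B ∈ 𝔄, A ∩ B ∈ 𝔄) (hcompl : ∀ A ∈ 𝔄, Aᶜ ∈ 𝔄)
    {A : Set D} (hA : A ∈ 𝔄) (hinf : A.Infinite) :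
    ∃ u : StoneOf 𝔄, A ∈ u.1 ∧ u ∈ stoneRemainder 𝔄 := by
  haveI : (Filter.cofinite ⊓ 𝓟 A).NeBot := hinf.cofinite_inf_principal_neBot
  set U := Ultrafilter.of (Filter.cofinite ⊓ 𝓟 A) with hU
  have hle : (U : Filter D) ≤ Filter.cofinite ⊓ 𝓟 A := Ultrafilter.of_le _
  have hcof : (U : Filter D) ≤ Filter.cofinite := hle.trans inf_le_left
  have hmemA : A ∈ U := hle (Filter.mem_inf_of_right (Filter.mem_principal_self A))
  have hrem : ∀ B : Set D, B ∈ U → B.Infinite := by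
    intro B hB
    by_contra hf
    rw [Set.not_infinite] at hf
    have hBc : Bᶜ ∈ U := hcof (by rw [Filter.mem_cofinite, compl_compl]; exact hf)
    have := Filter.inter_mem hB hBc
    rw [Set.inter_compl_self] at this
    exact Filter.empty_notMem (U : Filter D) this
  refine ⟨⟨{B | B ∈ 𝔄 ∧ B ∈ U}, ?_, ⟨huniv, Filter.univ_mem⟩, fun h => ?_, ?_, ?_, ?_⟩,
    ⟨hA, hmemA⟩, fun B hB => hrem B hB.2⟩
  · exact fun B hB => hB.1
  · exact Filter.empty_notMem (U : Filter D) h.2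
  · exact fun B hB C hC => ⟨hinter B hB.1 C hC.1, Filter.inter_mem hB.2 hC.2⟩
  · exact fun B hB C hC hBC => ⟨hC, Filter.mem_of_superset hB.2 hBC⟩
  · intro B hB
    rcases U.mem_or_compl_mem B with h | h
    · exact Or.inl ⟨hB, h⟩
    · exact Or.inr ⟨hcompl B hB, h⟩

end StoneOf
end Principal

section Separation
open Topology TopologicalSpace Set

namespace StoneOf

variable {D : Type*} {𝔄 : Set (Set D)}

lemma exists_sep_point (hcompl : ∀ A ∈ 𝔄, Aᶜ ∈ 𝔄) {u v : StoneOf 𝔄} (huv : u ≠ v) :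
    ∃ A ∈ 𝔄, A ∈ u.1 ∧ Aᶜ ∈ v.1 := by
  have hne : u.1 ≠ v.1 := fun h => huv (Subtype.ext h)
  have hex : ∃ A, (A ∈ u.1 ∧ A ∉ v.1) ∨ (A ∈ v.1 ∧ A ∉ u.1) := by
    by_contra hno
    push_neg at hno
    exact hne (Set.ext fun A => ⟨(hno A).1, (hno A).2⟩)
  obtain ⟨A, hA | hA⟩ := hex
  · have h𝔄 : A ∈ 𝔄 := mem_alg u hA.1
    exact ⟨A, h𝔄, hA.1, (compl_mem_iff v h𝔄).mpr hA.2⟩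
  · have h𝔄 : A ∈ 𝔄 := mem_alg v hA.1
    refine ⟨Aᶜ, hcompl A h𝔄, (compl_mem_iff u h𝔄).mpr hA.2, ?_⟩
    rw [compl_compl]
    exact hA.1

lemma t2space (hcompl : ∀ A ∈ 𝔄, Aᶜ ∈ 𝔄) : T2Space (StoneOf 𝔄) := by
  constructor
  intro u v huv
  obtain ⟨A, hA, hu, hv⟩ := exists_sep_point hcompl huv
  refine ⟨V 𝔄 A, V 𝔄 Aᶜ, isOpen_V hA, isOpen_V (hcompl A hA), hu, hv, ?_⟩
  rw [Set.disjoint_left]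
  intro w hw1 hw2
  have h0 := inter_mem w hw1 hw2
  rw [Set.inter_compl_self] at h0
  exact empty_not_mem w h0

lemma separation (hempt : ∅ ∈ 𝔄) (huniv : Set.univ ∈ 𝔄)
    (hunion : ∀ A ∈ 𝔄, ∀ B ∈ 𝔄, A ∪ B ∈ 𝔄) (hinter : ∀ A ∈ 𝔄, ∀ B ∈ 𝔄, A ∩ B ∈ 𝔄)
    (hcompl : ∀ A ∈ 𝔄, Aᶜ ∈ 𝔄)
    {C₁ C₂ : Set (StoneOf 𝔄)} (h₁ : IsCompact C₁) (h₂ : IsCompact C₂)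
    (hd : Disjoint C₁ C₂) : ∃ W ∈ 𝔄, C₁ ⊆ V 𝔄 W ∧ C₂ ⊆ V 𝔄 Wᶜ := by
  classical
  have stepA : ∀ v : C₂, ∃ B ∈ 𝔄, C₁ ⊆ V 𝔄 B ∧ Bᶜ ∈ (v : StoneOf 𝔄).1 := by
    rintro ⟨v, hv⟩
    have hch : ∀ u : C₁, ∃ A ∈ 𝔄, A ∈ (u : StoneOf 𝔄).1 ∧ Aᶜ ∈ v.1 := by
      rintro ⟨u, hu⟩
      refine exists_sep_point hcompl (fun h => ?_)
      have : u ∈ C₂ := by rw [show u = v from h]; exact hv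
      exact Set.disjoint_left.mp hd hu this
    choose A hA₁ hA₂ hA₃ using hch
    have hcover : C₁ ⊆ ⋃ u : C₁, V 𝔄 (A u) := fun u hu =>
      Set.mem_iUnion.mpr ⟨⟨u, hu⟩, hA₂ ⟨u, hu⟩⟩
    obtain ⟨t, ht⟩ := h₁.elim_finite_subcover (fun u : C₁ => V 𝔄 (A u))
      (fun u => isOpen_V (hA₁ u)) hcover
    have halg : (⋃ i ∈ t, A i) ∈ 𝔄 := alg_biUnion hempt hunion t A (fun i _ => hA₁ i)
    refine ⟨⋃ i ∈ t, A i, halg, ?_, ?_⟩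
    · intro u hu
      obtain ⟨i, hi, hmem⟩ := Set.mem_iUnion₂.mp (ht hu)
      exact up_mem u hmem halg (Set.subset_biUnion_of_mem hi)
    · have hc : (⋃ i ∈ t, A i)ᶜ = ⋂ i ∈ t, (A i)ᶜ := by rw [Set.compl_iUnion₂]
      rw [hc]
      exact biInter_mem v t _ (fun i _ => hA₃ i)
  choose B hB₁ hB₂ hB₃ using stepA
  have hcover₂ : C₂ ⊆ ⋃ v : C₂, V 𝔄 (B v)ᶜ := fun v hv =>
    Set.mem_iUnion.mpr ⟨⟨v, hv⟩, hB₃ ⟨v, hv⟩⟩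
  obtain ⟨s, hs⟩ := h₂.elim_finite_subcover (fun v : C₂ => V 𝔄 (B v)ᶜ)
    (fun v => isOpen_V (hcompl _ (hB₁ v))) hcover₂
  have halg : (⋂ j ∈ s, B j) ∈ 𝔄 := alg_biInter huniv hinter s B (fun j _ => hB₁ j)
  refine ⟨⋂ j ∈ s, B j, halg, ?_, ?_⟩
  · intro u hu
    exact biInter_mem u s B (fun j _ => hB₂ j hu)
  · intro v hv
    obtain ⟨j, hj, hmem⟩ := Set.mem_iUnion₂.mp (hs hv)
    refine up_mem v hmem (hcompl _ halg) ?_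
    exact Set.compl_subset_compl.mpr (Set.biInter_subset_of_mem hj)

end StoneOf
end Separation

section ContentSection
open Topology TopologicalSpace Set

namespace StoneOf

variable {D : Type*}

/-- Bundle of all hypotheses on the algebra and the finitely additive measure. -/
structure Setup (𝔄 : Set (Set D)) (μ : Set D → ℝ) : Prop where
  hempt : ∅ ∈ 𝔄
  huniv : Set.univ ∈ 𝔄
  hunion : ∀ A ∈ 𝔄, ∀ B ∈ 𝔄, A ∪ B ∈ 𝔄
  hinter : ∀ A ∈ 𝔄, ∀ B ∈ 𝔄, A ∩ B ∈ 𝔄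
  hcompl : ∀ A ∈ 𝔄, Aᶜ ∈ 𝔄
  hfin : ∀ F : Set D, F.Finite → F ∈ 𝔄
  hnonneg : ∀ A ∈ 𝔄, 0 ≤ μ A
  hprob : μ Set.univ = 1
  hadd : ∀ A ∈ 𝔄, ∀ B ∈ 𝔄, Disjoint A B → μ (A ∪ B) = μ A + μ B
  hasp : ∀ A ∈ 𝔄, (μ A = 0 ↔ A.Finite)

variable {𝔄 : Set (Set D)} {μ : Set D → ℝ}

lemma Setup.mono (S : Setup 𝔄 μ) {A B : Set D} (hA : A ∈ 𝔄) (hB : B ∈ 𝔄) (h : A ⊆ B) :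
    μ A ≤ μ B := by
  have h1 : B ∩ Aᶜ ∈ 𝔄 := S.hinter B hB _ (S.hcompl A hA)
  have he : A ∪ (B ∩ Aᶜ) = B := by
    ext x
    simp only [Set.mem_union, Set.mem_inter_iff, Set.mem_compl_iff]
    constructor
    · rintro (h1 | ⟨h1, _⟩)
      · exact h h1
      · exact h1
    · intro hxB
      by_cases hx : x ∈ A
      · exact Or.inl hx
      · exact Or.inr ⟨hxB, hx⟩
  have hd : Disjoint A (B ∩ Aᶜ) := Set.disjoint_left.mpr fun x hx ⟨_, hx2⟩ => hx2 hx
  have := S.hadd A hA _ h1 hd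
  rw [he] at this
  have := S.hnonneg _ h1
  linarith

lemma Setup.subadd (S : Setup 𝔄 μ) {A B : Set D} (hA : A ∈ 𝔄) (hB : B ∈ 𝔄) :
    μ (A ∪ B) ≤ μ A + μ B := by
  have h1 : B ∩ Aᶜ ∈ 𝔄 := S.hinter B hB _ (S.hcompl A hA)
  have he : A ∪ (B ∩ Aᶜ) = A ∪ B := by
    ext x
    simp only [Set.mem_union, Set.mem_inter_iff, Set.mem_compl_iff]
    constructor
    · rintro (h1 | ⟨h1, _⟩)
      · exact Or.inl h1
      · exact Or.inr h1
    · rintro (h1 | h1)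
      · exact Or.inl h1
      · by_cases hx : x ∈ A
        · exact Or.inl hx
        · exact Or.inr ⟨h1, hx⟩
  have hd : Disjoint A (B ∩ Aᶜ) := Set.disjoint_left.mpr fun x hx ⟨_, hx2⟩ => hx2 hx
  have hsum := S.hadd A hA _ h1 hd
  rw [he] at hsum
  have := S.mono h1 hB Set.inter_subset_left
  linarith

lemma Setup.split (S : Setup 𝔄 μ) {B Ws : Set D} (hB : B ∈ 𝔄) (hW : Ws ∈ 𝔄) :
    μ B = μ (B ∩ Ws) + μ (B ∩ Wsᶜ) := by
  have h1 : B ∩ Ws ∈ 𝔄 := S.hinter B hB Ws hW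
  have h2 : B ∩ Wsᶜ ∈ 𝔄 := S.hinter B hB _ (S.hcompl Ws hW)
  have hd : Disjoint (B ∩ Ws) (B ∩ Wsᶜ) :=
    Set.disjoint_left.mpr fun x ⟨_, hx⟩ ⟨_, hx2⟩ => hx2 hx
  have := S.hadd _ h1 _ h2 hd
  rw [Set.inter_union_compl] at this
  exact this

lemma Setup.mono_of_diff_finite (S : Setup 𝔄 μ) {A B : Set D} (hA : A ∈ 𝔄) (hB : B ∈ 𝔄)
    (h : (A \ B).Finite) : μ A ≤ μ B := by
  have hsplit := S.split hA hB
  have hz : μ (A ∩ Bᶜ) = 0 := by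
    rw [S.hasp _ (S.hinter A hA _ (S.hcompl B hB))]
    rw [← Set.diff_eq]
    exact h
  have hmono := S.mono (S.hinter A hA B hB) hB Set.inter_subset_right
  linarith

/-- Basic clopen subsets of the remainder. -/
def W (𝔄 : Set (Set D)) (A : Set D) : Set (stoneRemainder 𝔄) := {u | A ∈ u.1.1}

lemma mem_W {A : Set D} {u : stoneRemainder 𝔄} : u ∈ W 𝔄 A ↔ A ∈ u.1.1 := Iff.rfl

lemma isOpen_W {A : Set D} (hA : A ∈ 𝔄) : IsOpen (W 𝔄 A) :=
  (isOpen_V hA).preimage continuous_subtype_val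

lemma compl_W {A : Set D} (hA : A ∈ 𝔄) : (W 𝔄 A)ᶜ = W 𝔄 Aᶜ := by
  ext u
  simp only [Set.mem_compl_iff, mem_W]
  exact (compl_mem_iff u.1 hA).symm

lemma isClosed_W (hcompl : ∀ A ∈ 𝔄, Aᶜ ∈ 𝔄) {A : Set D} (hA : A ∈ 𝔄) :
    IsClosed (W 𝔄 A) := by
  rw [← isOpen_compl_iff, compl_W hA]
  exact isOpen_W (hcompl A hA)

lemma subset_W_of_subset {A B : Set D} (hB : B ∈ 𝔄) (hAB : A ⊆ B)
    {C : Set (stoneRemainder 𝔄)} (h : C ⊆ W 𝔄 A) : C ⊆ W 𝔄 B :=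
  fun u hu => up_mem u.1 (h hu) hB hAB

/-- The set of values of μ on clopen covers of C. -/
def covSet (𝔄 : Set (Set D)) (μ : Set D → ℝ) (C : Set (stoneRemainder 𝔄)) : Set ℝ :=
  {r | ∃ A ∈ 𝔄, C ⊆ W 𝔄 A ∧ μ A = r}

lemma covSet_nonempty (S : Setup 𝔄 μ) (C : Set (stoneRemainder 𝔄)) :
    (covSet 𝔄 μ C).Nonempty :=
  ⟨μ Set.univ, Set.univ, S.huniv, fun u _ => univ_mem u.1, rfl⟩

lemma covSet_bddBelow (S : Setup 𝔄 μ) (C : Set (stoneRemainder 𝔄)) :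
    BddBelow (covSet 𝔄 μ C) :=
  ⟨0, fun r ⟨A, hA, _, hr⟩ => hr ▸ S.hnonneg A hA⟩

lemma covSet_sInf_nonneg (S : Setup 𝔄 μ) (C : Set (stoneRemainder 𝔄)) :
    0 ≤ sInf (covSet 𝔄 μ C) :=
  le_csInf (covSet_nonempty S C) fun r ⟨A, hA, _, hr⟩ => hr ▸ S.hnonneg A hA

lemma covSet_anti (S : Setup 𝔄 μ) {C₁ C₂ : Set (stoneRemainder 𝔄)} (h : C₁ ⊆ C₂) :
    covSet 𝔄 μ C₂ ⊆ covSet 𝔄 μ C₁ :=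
  fun _ ⟨A, hA, hC, hr⟩ => ⟨A, hA, h.trans hC, hr⟩

lemma covSet_sInf_union (S : Setup 𝔄 μ) (C₁ C₂ : Set (stoneRemainder 𝔄)) :
    sInf (covSet 𝔄 μ (C₁ ∪ C₂)) ≤ sInf (covSet 𝔄 μ C₁) + sInf (covSet 𝔄 μ C₂) := by
  have key : ∀ a ∈ covSet 𝔄 μ C₁, ∀ b ∈ covSet 𝔄 μ C₂,
      sInf (covSet 𝔄 μ (C₁ ∪ C₂)) ≤ a + b := by
    rintro a ⟨A, hA, hCA, rfl⟩ b ⟨B, hB, hCB, rfl⟩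
    have hABalg : A ∪ B ∈ 𝔄 := S.hunion A hA B hB
    have hmem : μ (A ∪ B) ∈ covSet 𝔄 μ (C₁ ∪ C₂) := by
      refine ⟨A ∪ B, hABalg, ?_, rfl⟩
      rintro u (hu | hu)
      · exact up_mem u.1 (hCA hu) hABalg Set.subset_union_left
      · exact up_mem u.1 (hCB hu) hABalg Set.subset_union_right
    exact (csInf_le (covSet_bddBelow S _) hmem).trans (S.subadd hA hB)
  have h2 : ∀ b ∈ covSet 𝔄 μ C₂, sInf (covSet 𝔄 μ (C₁ ∪ C₂)) - b ≤ sInf (covSet 𝔄 μ C₁) :=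
    fun b hb => le_csInf (covSet_nonempty S C₁) fun a ha => by linarith [key a ha b hb]
  have h4 : sInf (covSet 𝔄 μ (C₁ ∪ C₂)) - sInf (covSet 𝔄 μ C₁) ≤ sInf (covSet 𝔄 μ C₂) :=
    le_csInf (covSet_nonempty S C₂) fun b hb => by linarith [h2 b hb]
  linarith

/-- The content on the remainder induced by μ. -/
noncomputable def lamCont (S : Setup 𝔄 μ) [CompactSpace (StoneOf 𝔄)] :
    Content (stoneRemainder 𝔄) where
  toFun C := Real.toNNReal (sInf (covSet 𝔄 μ C.1))
  mono' K₁ K₂ h := Real.toNNReal_mono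
    (csInf_le_csInf (covSet_bddBelow S _) (covSet_nonempty S _) (covSet_anti S h))
  sup_le' K₁ K₂ := by
    have h1 := covSet_sInf_union S K₁.1 K₂.1
    show Real.toNNReal (sInf (covSet 𝔄 μ ((K₁ ⊔ K₂) : Set (stoneRemainder 𝔄)))) ≤ _
    have e : ((K₁ ⊔ K₂) : Set (stoneRemainder 𝔄)) = K₁.1 ∪ K₂.1 := Compacts.coe_sup K₁ K₂
    rw [e]
    calc Real.toNNReal (sInf (covSet 𝔄 μ (K₁.1 ∪ K₂.1)))
        ≤ Real.toNNReal (sInf (covSet 𝔄 μ K₁.1) + sInf (covSet 𝔄 μ K₂.1)) :=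
          Real.toNNReal_mono h1
      _ = Real.toNNReal (sInf (covSet 𝔄 μ K₁.1)) + Real.toNNReal (sInf (covSet 𝔄 μ K₂.1)) :=
          Real.toNNReal_add (covSet_sInf_nonneg S _) (covSet_sInf_nonneg S _)
  sup_disjoint' K₁ K₂ hdis _ _ := by
    show Real.toNNReal (sInf (covSet 𝔄 μ ((K₁ ⊔ K₂) : Set (stoneRemainder 𝔄)))) = _
    have e : ((K₁ ⊔ K₂) : Set (stoneRemainder 𝔄)) = K₁.1 ∪ K₂.1 := Compacts.coe_sup K₁ K₂
    rw [e]
    -- separate the two compacta by a clopen set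
    have h₁ : IsCompact (Subtype.val '' K₁.1) := K₁.2.image continuous_subtype_val
    have h₂ : IsCompact (Subtype.val '' K₂.1) := K₂.2.image continuous_subtype_val
    have hd : Disjoint (Subtype.val '' K₁.1) (Subtype.val '' K₂.1) :=
      (Set.disjoint_image_iff Subtype.val_injective).mpr hdis
    obtain ⟨Ws, hWs, hV₁, hV₂⟩ :=
      separation S.hempt S.huniv S.hunion S.hinter S.hcompl h₁ h₂ hd
    have hK₁ : K₁.1 ⊆ W 𝔄 Ws := fun u hu => hV₁ ⟨u, hu, rfl⟩
    have hK₂ : K₂.1 ⊆ W 𝔄 Wsᶜ := fun u hu => hV₂ ⟨u, hu, rfl⟩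
    -- superadditivity
    have hge : sInf (covSet 𝔄 μ K₁.1) + sInf (covSet 𝔄 μ K₂.1) ≤
        sInf (covSet 𝔄 μ (K₁.1 ∪ K₂.1)) := by
      refine le_csInf (covSet_nonempty S _) ?_
      rintro r ⟨B, hB, hC, rfl⟩
      have hBW : B ∩ Ws ∈ 𝔄 := S.hinter B hB Ws hWs
      have hBWc : B ∩ Wsᶜ ∈ 𝔄 := S.hinter B hB _ (S.hcompl Ws hWs)
      have hc₁ : K₁.1 ⊆ W 𝔄 (B ∩ Ws) := fun u hu =>
        inter_mem u.1 (hC (Or.inl hu)) (hK₁ hu)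
      have hc₂ : K₂.1 ⊆ W 𝔄 (B ∩ Wsᶜ) := fun u hu =>
        inter_mem u.1 (hC (Or.inr hu)) (hK₂ hu)
      have hle₁ : sInf (covSet 𝔄 μ K₁.1) ≤ μ (B ∩ Ws) :=
        csInf_le (covSet_bddBelow S _) ⟨B ∩ Ws, hBW, hc₁, rfl⟩
      have hle₂ : sInf (covSet 𝔄 μ K₂.1) ≤ μ (B ∩ Wsᶜ) :=
        csInf_le (covSet_bddBelow S _) ⟨B ∩ Wsᶜ, hBWc, hc₂, rfl⟩
      have := S.split hB hWs
      linarith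
    have heq : sInf (covSet 𝔄 μ (K₁.1 ∪ K₂.1)) =
        sInf (covSet 𝔄 μ K₁.1) + sInf (covSet 𝔄 μ K₂.1) :=
      le_antisymm (covSet_sInf_union S K₁.1 K₂.1) hge
    rw [heq]
    exact Real.toNNReal_add (covSet_sInf_nonneg S _) (covSet_sInf_nonneg S _)

end StoneOf
end ContentSection

section MeasureSection
open Topology TopologicalSpace Set

namespace StoneOf

variable {D : Type*} {𝔄 : Set (Set D)} {μ : Set D → ℝ}

lemma lam_measure_univ (S : Setup 𝔄 μ) [CompactSpace (StoneOf 𝔄)] [BorelSpace (StoneOf 𝔄)]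
    [T2Space (StoneOf 𝔄)] [CompactSpace (stoneRemainder 𝔄)] :
    (lamCont S).measure Set.univ = 1 := by
  rw [Content.measure_apply _ MeasurableSet.univ,
    Content.outerMeasure_of_isOpen _ _ isOpen_univ,
    Content.innerContent_of_isCompact _ isCompact_univ isOpen_univ]
  suffices h : (lamCont S).toFun ⟨Set.univ, isCompact_univ⟩ = 1 by
    rw [show (lamCont S) ⟨Set.univ, isCompact_univ⟩ =
      (((lamCont S).toFun ⟨Set.univ, isCompact_univ⟩ : NNReal) : ENNReal) from rfl, h, ENNReal.coe_one]
  show Real.toNNReal (sInf (covSet 𝔄 μ (Set.univ : Set (stoneRemainder 𝔄)))) = 1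
  have hinf1 : sInf (covSet 𝔄 μ (Set.univ : Set (stoneRemainder 𝔄))) = 1 := by
    refine le_antisymm (csInf_le (covSet_bddBelow S _)
      ⟨Set.univ, S.huniv, fun u _ => univ_mem u.1, S.hprob⟩) ?_
    refine le_csInf (covSet_nonempty S _) ?_
    rintro r ⟨B, hB, hcov, rfl⟩
    have hBcfin : Bᶜ.Finite := by
      by_contra hf
      have hinf2 : Bᶜ.Infinite := hf
      obtain ⟨u, hu1, hu2⟩ := exists_remainder_mem S.huniv S.hinter S.hcompl
        (S.hcompl B hB) hinf2
      have hvB : B ∈ u.1 := hcov (Set.mem_univ (⟨u, hu2⟩ : stoneRemainder 𝔄))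
      have h0 := inter_mem u hvB hu1
      rw [Set.inter_compl_self] at h0
      exact empty_not_mem u h0
    have hz : μ Bᶜ = 0 := (S.hasp _ (S.hcompl B hB)).mpr hBcfin
    have hsum := S.hadd B hB _ (S.hcompl B hB) disjoint_compl_right
    rw [Set.union_compl_self, S.hprob] at hsum
    linarith
  rw [hinf1, Real.toNNReal_one]

lemma lam_measure_pos (S : Setup 𝔄 μ) [CompactSpace (StoneOf 𝔄)] [BorelSpace (StoneOf 𝔄)]
    [T2Space (StoneOf 𝔄)] [CompactSpace (stoneRemainder 𝔄)]
    {U : Set (stoneRemainder 𝔄)} (hU : IsOpen U) (hne : U.Nonempty) :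
    0 < (lamCont S).measure U := by
  obtain ⟨u, hu⟩ := hne
  obtain ⟨O, hO, hUO⟩ := isOpen_induced_iff.mp hU
  have huO : (u : StoneOf 𝔄) ∈ O := by rw [← hUO] at hu; exact hu
  obtain ⟨Vs, ⟨A, hA, rfl⟩, hmemV, hsubV⟩ :=
    (isBasis S.hinter S.huniv).exists_subset_of_mem_open huO hO
  have hAinf : A.Infinite := u.2 A hmemV
  have hsub : W 𝔄 A ⊆ U := fun v hv => by
    rw [← hUO]
    exact hsubV hv
  have hWc : IsCompact (W 𝔄 A) := (isClosed_W S.hcompl hA).isCompact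
  rw [Content.measure_apply _ hU.measurableSet, Content.outerMeasure_of_isOpen _ _ hU]
  refine lt_of_lt_of_le ?_ ((lamCont S).le_innerContent ⟨W 𝔄 A, hWc⟩ ⟨U, hU⟩ hsub)
  rw [show (lamCont S) ⟨W 𝔄 A, hWc⟩ = (((lamCont S).toFun ⟨W 𝔄 A, hWc⟩ : NNReal) : ENNReal) from rfl]
  rw [ENNReal.coe_pos]
  apply Real.toNNReal_pos.mpr
  have hpos : 0 < μ A :=
    lt_of_le_of_ne (S.hnonneg A hA) (Ne.symm fun h => hAinf ((S.hasp A hA).mp h))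
  refine lt_of_lt_of_le hpos (le_csInf (covSet_nonempty S _) ?_)
  rintro r ⟨B, hB, hcov, rfl⟩
  have hdiff : (A \ B).Finite := by
    by_contra hf
    have hABc : A ∩ Bᶜ ∈ 𝔄 := S.hinter A hA _ (S.hcompl B hB)
    rw [Set.diff_eq] at hf
    have hinf2 : (A ∩ Bᶜ).Infinite := hf
    obtain ⟨v, hv1, hv2⟩ := exists_remainder_mem S.huniv S.hinter S.hcompl hABc hinf2
    have hvA : A ∈ v.1 := up_mem v hv1 hA Set.inter_subset_left
    have hvB : B ∈ v.1 := hcov (show (⟨v, hv2⟩ : stoneRemainder 𝔄) ∈ W 𝔄 A from hvA)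
    have hvBc : Bᶜ ∈ v.1 := up_mem v hv1 (S.hcompl B hB) Set.inter_subset_right
    have h0 := inter_mem v hvB hvBc
    rw [Set.inter_compl_self] at h0
    exact empty_not_mem v h0
  exact S.mono_of_diff_finite hA hB hdiff

end StoneOf
end MeasureSection

/-- if 𝔄 carries an almost strictly positive finitely additive
probability measure and 𝔄/fin is not σ-centred, then the Stone space K of 𝔄
is a compactification of the discrete space D whose remainder is nonseparable
and carries a strictly positive regular Borel probability measure. -/
theorem stmt_15 (D : Type*) [Countable D] (𝔄 : Set (Set D))
    (hempt : ∅ ∈ 𝔄) (huniv : Set.univ ∈ 𝔄)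
    (hunion : ∀ A ∈ 𝔄, ∀ B ∈ 𝔄, A ∪ B ∈ 𝔄)
    (hinter : ∀ A ∈ 𝔄, ∀ B ∈ 𝔄, A ∩ B ∈ 𝔄)
    (hcompl : ∀ A ∈ 𝔄, Aᶜ ∈ 𝔄)
    (hfin : ∀ F : Set D, F.Finite → F ∈ 𝔄)
    (μ : Set D → ℝ)
    (hnonneg : ∀ A ∈ 𝔄, 0 ≤ μ A) (hprob : μ Set.univ = 1)
    (hadd : ∀ A ∈ 𝔄, ∀ B ∈ 𝔄, Disjoint A B → μ (A ∪ B) = μ A + μ B)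
    (hasp : ∀ A ∈ 𝔄, (μ A = 0 ↔ A.Finite))
    (hnsc : ¬ SigmaCentredModFin 𝔄) :
    -- K is compact
    CompactSpace (StoneOf 𝔄) ∧
    -- D embeds (via principal ultrafilters) as a dense set of isolated points
    (∃ e : D → StoneOf 𝔄,
      (∀ d : D, (e d).1 = {A : Set D | A ∈ 𝔄 ∧ d ∈ A}) ∧
      Function.Injective e ∧ DenseRange e ∧ ∀ d : D, IsOpen {e d}) ∧
    -- the remainder is not separable
    ¬ (∃ T : Set (stoneRemainder 𝔄), T.Countable ∧ Dense T) ∧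
    -- the remainder carries a strictly positive regular Borel prob. measure
    ∃ m : Measure (stoneRemainder 𝔄),
      IsProbabilityMeasure m ∧ m.Regular ∧
      ∀ U : Set (stoneRemainder 𝔄), IsOpen U → U.Nonempty → 0 < m U := by
  classical
  have S : StoneOf.Setup 𝔄 μ :=
    ⟨hempt, huniv, hunion, hinter, hcompl, hfin, hnonneg, hprob, hadd, hasp⟩
  haveI hK : CompactSpace (StoneOf 𝔄) := StoneOf.compactSpace hcompl
  haveI : BorelSpace (StoneOf 𝔄) := ⟨rfl⟩
  haveI : T2Space (StoneOf 𝔄) := StoneOf.t2space hcompl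
  haveI : CompactSpace (stoneRemainder 𝔄) :=
    isCompact_iff_compactSpace.mp (StoneOf.isClosed_remainder hfin).isCompact
  have hDinf : (Set.univ : Set D).Infinite := by
    intro hf
    have h0 := (hasp _ huniv).mpr hf
    rw [hprob] at h0
    norm_num at h0
  refine ⟨hK, ?_, ?_, ?_⟩
  · -- the embedding of D
    refine ⟨fun d => ⟨{A | A ∈ 𝔄 ∧ d ∈ A}, StoneOf.isUltra_principal huniv hinter hcompl d⟩,
      fun d => rfl, ?_, ?_, ?_⟩
    · intro d₁ d₂ h
      have h1 : ({d₁} : Set D) ∈ 𝔄 := hfin _ (Set.finite_singleton d₁)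
      have hv : ({A | A ∈ 𝔄 ∧ d₁ ∈ A} : Set (Set D)) = {A | A ∈ 𝔄 ∧ d₂ ∈ A} :=
        congrArg Subtype.val h
      have hm : ({d₁} : Set D) ∈ {A | A ∈ 𝔄 ∧ d₂ ∈ A} := by
        rw [← hv]
        exact ⟨h1, rfl⟩
      exact hm.2.symm
    · refine (StoneOf.isBasis hinter huniv).dense_iff.mpr ?_
      rintro o ⟨A, hA, rfl⟩ ⟨u, hu⟩
      obtain ⟨d, hd⟩ := StoneOf.nonempty_of_mem u hu
      exact ⟨⟨{A | A ∈ 𝔄 ∧ d ∈ A}, StoneOf.isUltra_principal huniv hinter hcompl d⟩,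
        ⟨hA, hd⟩, d, rfl⟩
    · intro d
      have hsd : ({d} : Set D) ∈ 𝔄 := hfin _ (Set.finite_singleton d)
      have he : ({(⟨{A | A ∈ 𝔄 ∧ d ∈ A}, StoneOf.isUltra_principal huniv hinter hcompl d⟩ :
          StoneOf 𝔄)} : Set (StoneOf 𝔄)) = StoneOf.V 𝔄 {d} := by
        ext v
        simp only [Set.mem_singleton_iff, StoneOf.mem_V]
        constructor
        · rintro rfl
          exact ⟨hsd, rfl⟩
        · intro h
          exact Subtype.ext (StoneOf.eq_principal_of_singleton_mem h)
      show IsOpen ({(⟨{A | A ∈ 𝔄 ∧ d ∈ A}, StoneOf.isUltra_principal huniv hinter hcompl d⟩ :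
          StoneOf 𝔄)} : Set (StoneOf 𝔄))
      rw [he]
      exact StoneOf.isOpen_V hsd
  · -- nonseparability
    rintro ⟨T, hTc, hTd⟩
    apply hnsc
    have hRne : (stoneRemainder 𝔄).Nonempty := by
      obtain ⟨u, _, hu2⟩ :=
        StoneOf.exists_remainder_mem huniv hinter hcompl huniv hDinf
      exact ⟨u, hu2⟩
    haveI : Nonempty (stoneRemainder 𝔄) := hRne.to_subtype
    have hTne : T.Nonempty := hTd.nonempty
    obtain ⟨f, hf⟩ := hTc.exists_eq_range hTne
    refine ⟨fun n => (f n).1.1, fun n => (f n).1.2.1, ?_, ?_⟩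
    · intro A hA hAinf
      obtain ⟨u, hu1, hu2⟩ := StoneOf.exists_remainder_mem huniv hinter hcompl hA hAinf
      obtain ⟨x, hx1, hx2⟩ := dense_iff_inter_open.mp hTd _ (StoneOf.isOpen_W hA)
        ⟨⟨u, hu2⟩, hu1⟩
      rw [hf] at hx2
      obtain ⟨n, rfl⟩ := hx2
      exact ⟨n, hx1⟩
    · intro n t ht
      have he : ⋂₀ (↑t : Set (Set D)) = ⋂ A ∈ t, A := by
        ext x; simp
      have hmem : ⋂₀ (↑t : Set (Set D)) ∈ (f n).1.1 := by
        rw [he]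
        exact StoneOf.biInter_mem (f n).1 t _ (fun A hA => ht (Finset.mem_coe.mpr hA))
      exact (f n).2 _ hmem
  · -- the measure
    refine ⟨(StoneOf.lamCont S).measure, ⟨StoneOf.lam_measure_univ S⟩,
      (StoneOf.lamCont S).regular, fun U hU hne => StoneOf.lam_measure_pos S hU hne⟩
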